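/- Let X and Y be real random variables with |X| ≤ M₁ a.s. and |Y| ≤ M₂ a.s., measurable with respect to sub-σ-algebras 𝒜 and ℬ respectively. Then |Cov(X,Y)| ≤ 4·M₁·M₂·α(𝒜,ℬ), where α(𝒜,ℬ) = sup_{A∈𝒜, B∈ℬ} |P(A∩B) − P(A)P(B)| is the strong mixing coefficient. -/

import Mathlib

open MeasureTheory

/-- Integral of a 0/1 indicator equals the measure of the set. -/
lemma indicator_integral {Ω : Type*} [m0 : MeasurableSpace Ω] (μ : Measure Ω)
    [IsProbabilityMeasure μ] {S : Set Ω} (hS : MeasurableSet S) :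
    ∫ ω, S.indicator (fun _ => (1 : ℝ)) ω ∂μ = (μ S).toReal := by
  rw [integral_indicator_const (1 : ℝ) hS]
  simp
  rfl

lemma indicator_integrable {Ω : Type*} [m0 : MeasurableSpace Ω] (μ : Measure Ω)
    [IsProbabilityMeasure μ] {S : Set Ω} (hS : MeasurableSet S) :
    Integrable (fun ω => S.indicator (fun _ => (1 : ℝ)) ω) μ := by
  exact (integrable_const (1 : ℝ)).indicator hS

/-- Key reduction via conditional expectation: the covariance of a bounded `m`-measurable
function with an integrable function is dominated by `M` times the covariance of a
`±1`-valued `m`-measurable function with the same function. -/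
lemma key_cov {Ω : Type*} [m0 : MeasurableSpace Ω] (μ : Measure Ω) [IsProbabilityMeasure μ]
    (m : MeasurableSpace Ω) (hm : m ≤ m0) (f g : Ω → ℝ) (hf : Measurable[m] f)
    (hg : Integrable g μ) (M : ℝ) (hMf : ∀ᵐ ω ∂μ, |f ω| ≤ M) :
    ∃ ξ : Ω → ℝ, Measurable[m] ξ ∧ (∀ ω, ξ ω = 1 ∨ ξ ω = -1) ∧
      |(∫ ω, f ω * g ω ∂μ) - (∫ ω, f ω ∂μ) * (∫ ω, g ω ∂μ)| ≤
        M * ((∫ ω, ξ ω * g ω ∂μ) - (∫ ω, ξ ω ∂μ) * (∫ ω, g ω ∂μ)) := by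
  haveI : IsFiniteMeasure (μ.trim hm) := isFiniteMeasure_trim hm
  haveI : SigmaFinite (μ.trim hm) := inferInstance
  have hfm0 : Measurable[m0] f := hf.mono hm le_rfl
  have hMnn : 0 ≤ M := by
    obtain ⟨ω, hω⟩ := hMf.exists
    exact le_trans (abs_nonneg _) hω
  set c : ℝ := ∫ ω, g ω ∂μ with hc
  set g' : Ω → ℝ := fun ω => g ω - c with hg'def
  have hg' : Integrable g' μ := hg.sub (integrable_const c)
  set h : Ω → ℝ := μ[g'|m] with hhdef
  have hhsm : StronglyMeasurable[m] h := stronglyMeasurable_condExp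
  have hhint : Integrable h μ := integrable_condExp
  -- generic lemma: for bounded m-measurable φ, ∫ φ * g' = ∫ φ * h
  have key : ∀ (φ : Ω → ℝ) (C : ℝ), Measurable[m] φ → (∀ᵐ ω ∂μ, ‖φ ω‖ ≤ C) →
      ∫ ω, φ ω * g' ω ∂μ = ∫ ω, φ ω * h ω ∂μ := by
    intro φ C hφ hφC
    have h1 : μ[φ * g'|m] =ᵐ[μ] φ * μ[g'|m] :=
      condExp_stronglyMeasurable_mul_of_bound hm hφ.stronglyMeasurable hg' C hφC
    have h2 : ∫ ω, (μ[φ * g'|m]) ω ∂μ = ∫ ω, (φ * g') ω ∂μ := integral_condExp hm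
    have h3 : ∫ ω, (μ[φ * g'|m]) ω ∂μ = ∫ ω, (φ * μ[g'|m]) ω ∂μ := integral_congr_ae h1
    calc ∫ ω, φ ω * g' ω ∂μ = ∫ ω, (φ * g') ω ∂μ := rfl
      _ = ∫ ω, (μ[φ * g'|m]) ω ∂μ := h2.symm
      _ = ∫ ω, (φ * μ[g'|m]) ω ∂μ := h3
      _ = ∫ ω, φ ω * h ω ∂μ := rfl
  -- also: for bounded m-measurable φ, ∫ φ * g' = ∫ φ g - (∫ φ) * c
  have expand : ∀ (φ : Ω → ℝ) (C : ℝ), Measurable[m0] φ → (∀ᵐ ω ∂μ, ‖φ ω‖ ≤ C) →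
      ∫ ω, φ ω * g' ω ∂μ = (∫ ω, φ ω * g ω ∂μ) - (∫ ω, φ ω ∂μ) * c := by
    intro φ C hφ hφC
    have hφint : Integrable φ μ :=
      Integrable.mono' (integrable_const C) hφ.aestronglyMeasurable hφC
    have hφg : Integrable (fun ω => φ ω * g ω) μ := hg.bdd_mul hφ.aestronglyMeasurable hφC
    have hφc : Integrable (fun ω => φ ω * c) μ := hφint.mul_const c
    have : ∫ ω, φ ω * g' ω ∂μ = ∫ ω, (φ ω * g ω - φ ω * c) ∂μ := by
      apply integral_congr_ae
      filter_upwards with ω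
      simp [g', mul_sub]
    rw [this, integral_sub hφg hφc, integral_mul_const]
  set ξ : Ω → ℝ := fun ω => if 0 ≤ h ω then 1 else -1 with hξdef
  have hξm : Measurable[m] ξ := by
    apply Measurable.ite _ measurable_const measurable_const
    exact measurableSet_le measurable_const hhsm.measurable
  have hξpm : ∀ ω, ξ ω = 1 ∨ ξ ω = -1 := by
    intro ω; by_cases hω : 0 ≤ h ω <;> simp [ξ, hω]
  have hξbd : ∀ᵐ ω ∂μ, ‖ξ ω‖ ≤ 1 := by
    filter_upwards with ω
    rcases hξpm ω with h1 | h1 <;> simp [h1]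
  have hξh : ∀ ω, ξ ω * h ω = |h ω| := by
    intro ω
    by_cases hω : 0 ≤ h ω
    · simp [ξ, hω, abs_of_nonneg hω]
    · push_neg at hω
      simp [ξ, not_le.2 hω, abs_of_neg hω]
  refine ⟨ξ, hξm, hξpm, ?_⟩
  have hfbd : ∀ᵐ ω ∂μ, ‖f ω‖ ≤ M := by simpa [Real.norm_eq_abs] using hMf
  have e1 : (∫ ω, f ω * g ω ∂μ) - (∫ ω, f ω ∂μ) * c = ∫ ω, f ω * h ω ∂μ := by
    rw [← expand f M hfm0 hfbd, key f M hf hfbd]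
  have e2 : (∫ ω, ξ ω * g ω ∂μ) - (∫ ω, ξ ω ∂μ) * c = ∫ ω, |h ω| ∂μ := by
    rw [← expand ξ 1 (hξm.mono hm le_rfl) hξbd, key ξ 1 hξm hξbd]
    exact integral_congr_ae (Filter.Eventually.of_forall fun ω => hξh ω)
  rw [e1, e2]
  have hfh : Integrable (fun ω => f ω * h ω) μ := hhint.bdd_mul hfm0.aestronglyMeasurable hfbd
  calc |∫ ω, f ω * h ω ∂μ| ≤ ∫ ω, |f ω| * |h ω| ∂μ := by
        simpa [abs_mul] using norm_integral_le_integral_norm (fun ω => f ω * h ω) (μ := μ)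
    _ ≤ ∫ ω, M * |h ω| ∂μ := by
        have habs : Integrable (fun ω => |f ω| * |h ω|) μ := by
          simpa [abs_mul] using hfh.abs
        apply integral_mono_ae habs (hhint.abs.const_mul M)
        filter_upwards [hMf] with ω hω
        exact mul_le_mul_of_nonneg_right hω (abs_nonneg _)
    _ = M * ∫ ω, |h ω| ∂μ := integral_const_mul M _

/-- The covariance of two `±1`-valued functions measurable w.r.t. `𝒜` and `ℬ`
is bounded by `4α`. -/
lemma pm_cov {Ω : Type*} [m0 : MeasurableSpace Ω] (μ : Measure Ω) [IsProbabilityMeasure μ]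
    (𝒜 ℬ : MeasurableSpace Ω) (h𝒜 : 𝒜 ≤ m0) (hℬ : ℬ ≤ m0)
    (ξ η : Ω → ℝ) (hξm : Measurable[𝒜] ξ) (hηm : Measurable[ℬ] η)
    (hξpm : ∀ ω, ξ ω = 1 ∨ ξ ω = -1) (hηpm : ∀ ω, η ω = 1 ∨ η ω = -1)
    (α : ℝ)
    (hα : α = sSup {r : ℝ | ∃ A B : Set Ω, MeasurableSet[𝒜] A ∧ MeasurableSet[ℬ] B ∧
      r = |(μ (A ∩ B)).toReal - (μ A).toReal * (μ B).toReal|}) :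
    |(∫ ω, η ω * ξ ω ∂μ) - (∫ ω, η ω ∂μ) * (∫ ω, ξ ω ∂μ)| ≤ 4 * α := by
  set S := {r : ℝ | ∃ A B : Set Ω, MeasurableSet[𝒜] A ∧ MeasurableSet[ℬ] B ∧
      r = |(μ (A ∩ B)).toReal - (μ A).toReal * (μ B).toReal|} with hS
  set A : Set Ω := {ω | ξ ω = 1} with hAdef
  set B : Set Ω := {ω | η ω = 1} with hBdef
  have hA : MeasurableSet[𝒜] A := hξm (measurableSet_singleton 1)
  have hB : MeasurableSet[ℬ] B := hηm (measurableSet_singleton 1)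
  have hA0 : MeasurableSet[m0] A := h𝒜 _ hA
  have hB0 : MeasurableSet[m0] B := hℬ _ hB
  have hAB0 : MeasurableSet[m0] (A ∩ B) := hA0.inter hB0
  set iA : Ω → ℝ := fun ω => A.indicator (fun _ => (1 : ℝ)) ω with hiA
  set iB : Ω → ℝ := fun ω => B.indicator (fun _ => (1 : ℝ)) ω with hiB
  set iAB : Ω → ℝ := fun ω => (A ∩ B).indicator (fun _ => (1 : ℝ)) ω with hiAB
  have hξeq : ∀ ω, ξ ω = 2 * iA ω - 1 := by
    intro ω
    rcases hξpm ω with h1 | h1 <;>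
      simp [iA, Set.indicator_apply, A, h1] <;> norm_num
  have hηeq : ∀ ω, η ω = 2 * iB ω - 1 := by
    intro ω
    rcases hηpm ω with h1 | h1 <;>
      simp [iB, Set.indicator_apply, B, h1] <;> norm_num
  have hind : ∀ ω, iA ω * iB ω = iAB ω := by
    intro ω
    by_cases hωA : ω ∈ A <;> by_cases hωB : ω ∈ B <;>
      simp [iA, iB, iAB, Set.indicator_apply, hωA, hωB]
  have hiAint := indicator_integrable (m0 := m0) μ hA0
  have hiBint := indicator_integrable (m0 := m0) μ hB0
  have hiABint := indicator_integrable (m0 := m0) μ hAB0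
  have hIA : ∫ ω, iA ω ∂μ = (μ A).toReal := indicator_integral (m0 := m0) μ hA0
  have hIB : ∫ ω, iB ω ∂μ = (μ B).toReal := indicator_integral (m0 := m0) μ hB0
  have hIAB : ∫ ω, iAB ω ∂μ = (μ (A ∩ B)).toReal := indicator_integral (m0 := m0) μ hAB0
  have hIξ : ∫ ω, ξ ω ∂μ = 2 * (μ A).toReal - 1 := by
    have : ∫ ω, ξ ω ∂μ = ∫ ω, (2 * iA ω - 1) ∂μ :=
      integral_congr_ae (Filter.Eventually.of_forall hξeq)
    rw [this, integral_sub (hiAint.const_mul 2) (integrable_const 1),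
      integral_const_mul, hIA]
    simp
  have hIη : ∫ ω, η ω ∂μ = 2 * (μ B).toReal - 1 := by
    have : ∫ ω, η ω ∂μ = ∫ ω, (2 * iB ω - 1) ∂μ :=
      integral_congr_ae (Filter.Eventually.of_forall hηeq)
    rw [this, integral_sub (hiBint.const_mul 2) (integrable_const 1),
      integral_const_mul, hIB]
    simp
  have hIηξ : ∫ ω, η ω * ξ ω ∂μ =
      4 * (μ (A ∩ B)).toReal - 2 * (μ A).toReal - 2 * (μ B).toReal + 1 := by
    have hpt : ∀ ω, η ω * ξ ω = 4 * iAB ω - 2 * iA ω - 2 * iB ω + 1 := by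
      intro ω
      rw [hξeq ω, hηeq ω, ← hind ω]
      ring
    have : ∫ ω, η ω * ξ ω ∂μ = ∫ ω, (4 * iAB ω - 2 * iA ω - 2 * iB ω + 1) ∂μ :=
      integral_congr_ae (Filter.Eventually.of_forall hpt)
    rw [this]
    have I3 : Integrable (fun ω => 4 * iAB ω) μ := hiABint.const_mul 4
    have I4 : Integrable (fun ω => 2 * iA ω) μ := hiAint.const_mul 2
    have I5 : Integrable (fun ω => 2 * iB ω) μ := hiBint.const_mul 2
    have I1 : Integrable (fun ω => 4 * iAB ω - 2 * iA ω) μ := I3.sub I4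
    have I2 : Integrable (fun ω => 4 * iAB ω - 2 * iA ω - 2 * iB ω) μ := I1.sub I5
    calc ∫ ω, (4 * iAB ω - 2 * iA ω - 2 * iB ω + 1) ∂μ
        = (∫ ω, (4 * iAB ω - 2 * iA ω - 2 * iB ω) ∂μ) + ∫ _ω, (1:ℝ) ∂μ :=
          integral_add I2 (integrable_const 1)
      _ = ((∫ ω, (4 * iAB ω - 2 * iA ω) ∂μ) - ∫ ω, 2 * iB ω ∂μ) + ∫ _ω, (1:ℝ) ∂μ := by
          rw [integral_sub I1 I5]
      _ = (((∫ ω, 4 * iAB ω ∂μ) - ∫ ω, 2 * iA ω ∂μ) - ∫ ω, 2 * iB ω ∂μ) + ∫ _ω, (1:ℝ) ∂μ := by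
          rw [integral_sub I3 I4]
      _ = 4 * (μ (A ∩ B)).toReal - 2 * (μ A).toReal - 2 * (μ B).toReal + 1 := by
          rw [integral_const_mul, integral_const_mul, integral_const_mul, hIA, hIB, hIAB]
          simp
  have hcov : (∫ ω, η ω * ξ ω ∂μ) - (∫ ω, η ω ∂μ) * (∫ ω, ξ ω ∂μ) =
      4 * ((μ (A ∩ B)).toReal - (μ A).toReal * (μ B).toReal) := by
    rw [hIηξ, hIη, hIξ]; ring
  rw [hcov, abs_mul, abs_of_nonneg (by norm_num : (0:ℝ) ≤ 4)]
  have hmem : |(μ (A ∩ B)).toReal - (μ A).toReal * (μ B).toReal| ∈ S :=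
    ⟨A, B, hA, hB, rfl⟩
  have hbdd : BddAbove S := by
    refine ⟨2, fun r hr => ?_⟩
    obtain ⟨A', B', _, _, hr⟩ := hr
    have h1 : (μ (A' ∩ B')).toReal ≤ 1 := by
      have := prob_le_one (μ := μ) (s := A' ∩ B')
      simpa using ENNReal.toReal_mono (by norm_num) this
    have h2 : (μ A').toReal ≤ 1 := by
      have := prob_le_one (μ := μ) (s := A')
      simpa using ENNReal.toReal_mono (by norm_num) this
    have h3 : (μ B').toReal ≤ 1 := by
      have := prob_le_one (μ := μ) (s := B')
      simpa using ENNReal.toReal_mono (by norm_num) this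
    have h4 : (0:ℝ) ≤ (μ (A' ∩ B')).toReal := ENNReal.toReal_nonneg
    have h5 : (0:ℝ) ≤ (μ A').toReal := ENNReal.toReal_nonneg
    have h6 : (0:ℝ) ≤ (μ B').toReal := ENNReal.toReal_nonneg
    rw [hr]
    have : |(μ (A' ∩ B')).toReal - (μ A').toReal * (μ B').toReal| ≤
        |(μ (A' ∩ B')).toReal| + |(μ A').toReal * (μ B').toReal| := abs_sub _ _
    refine this.trans ?_
    rw [abs_of_nonneg h4, abs_of_nonneg (mul_nonneg h5 h6)]
    nlinarith
  have : |(μ (A ∩ B)).toReal - (μ A).toReal * (μ B).toReal| ≤ α := by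
    rw [hα]; exact le_csSup hbdd hmem
  linarith

theorem stmt_18 {Ω : Type*} [m0 : MeasurableSpace Ω] (μ : Measure Ω) [IsProbabilityMeasure μ]
    (𝒜 ℬ : MeasurableSpace Ω) (h𝒜 : 𝒜 ≤ m0) (hℬ : ℬ ≤ m0)
    (X Y : Ω → ℝ) (hX : Measurable[𝒜] X) (hY : Measurable[ℬ] Y)
    (M₁ M₂ : ℝ) (hM₁ : ∀ᵐ ω ∂μ, |X ω| ≤ M₁) (hM₂ : ∀ᵐ ω ∂μ, |Y ω| ≤ M₂)
    (α : ℝ)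
    (hα : α = sSup {r : ℝ | ∃ A B : Set Ω, MeasurableSet[𝒜] A ∧ MeasurableSet[ℬ] B ∧
      r = |(μ (A ∩ B)).toReal - (μ A).toReal * (μ B).toReal|}) :
    |(∫ ω, X ω * Y ω ∂μ) - (∫ ω, X ω ∂μ) * (∫ ω, Y ω ∂μ)| ≤ 4 * M₁ * M₂ * α := by
  have hM₁nn : 0 ≤ M₁ := by
    obtain ⟨ω, hω⟩ := hM₁.exists; exact le_trans (abs_nonneg _) hω
  have hM₂nn : 0 ≤ M₂ := by
    obtain ⟨ω, hω⟩ := hM₂.exists; exact le_trans (abs_nonneg _) hω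
  have hYm0 : Measurable[m0] Y := hY.mono hℬ le_rfl
  have hYint : Integrable Y μ := by
    refine Integrable.mono' (integrable_const M₂) hYm0.aestronglyMeasurable ?_
    simpa [Real.norm_eq_abs] using hM₂
  obtain ⟨ξ, hξm, hξpm, hb1⟩ := key_cov (m0 := m0) μ 𝒜 h𝒜 X Y hX hYint M₁ hM₁
  have hξm0 : Measurable[m0] ξ := hξm.mono h𝒜 le_rfl
  have hξbd : ∀ᵐ ω ∂μ, |ξ ω| ≤ 1 := by
    filter_upwards with ω
    rcases hξpm ω with h1 | h1 <;> simp [h1]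
  have hξint : Integrable ξ μ := by
    refine Integrable.mono' (integrable_const 1) hξm0.aestronglyMeasurable ?_
    simpa [Real.norm_eq_abs] using hξbd
  obtain ⟨η, hηm, hηpm, hb2⟩ := key_cov (m0 := m0) μ ℬ hℬ Y ξ hY hξint M₂ hM₂
  -- covariance of ξ and Y equals covariance of Y and ξ
  have hcomm : (∫ ω, ξ ω * Y ω ∂μ) - (∫ ω, ξ ω ∂μ) * (∫ ω, Y ω ∂μ) =
      (∫ ω, Y ω * ξ ω ∂μ) - (∫ ω, Y ω ∂μ) * (∫ ω, ξ ω ∂μ) := by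
    rw [integral_congr_ae (Filter.Eventually.of_forall (fun ω => mul_comm (ξ ω) (Y ω)))]
    ring
  have hpm := pm_cov (m0 := m0) μ 𝒜 ℬ h𝒜 hℬ ξ η hξm hηm hξpm hηpm α hα
  have h1 : (∫ ω, η ω * ξ ω ∂μ) - (∫ ω, η ω ∂μ) * (∫ ω, ξ ω ∂μ) ≤ 4 * α :=
    le_trans (le_abs_self _) hpm
  have h2 : (∫ ω, Y ω * ξ ω ∂μ) - (∫ ω, Y ω ∂μ) * (∫ ω, ξ ω ∂μ) ≤ M₂ * (4 * α) := by
    calc (∫ ω, Y ω * ξ ω ∂μ) - (∫ ω, Y ω ∂μ) * (∫ ω, ξ ω ∂μ)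
        ≤ |(∫ ω, Y ω * ξ ω ∂μ) - (∫ ω, Y ω ∂μ) * (∫ ω, ξ ω ∂μ)| := le_abs_self _
      _ ≤ M₂ * ((∫ ω, η ω * ξ ω ∂μ) - (∫ ω, η ω ∂μ) * (∫ ω, ξ ω ∂μ)) := hb2
      _ ≤ M₂ * (4 * α) := mul_le_mul_of_nonneg_left h1 hM₂nn
  calc |(∫ ω, X ω * Y ω ∂μ) - (∫ ω, X ω ∂μ) * (∫ ω, Y ω ∂μ)|
      ≤ M₁ * ((∫ ω, ξ ω * Y ω ∂μ) - (∫ ω, ξ ω ∂μ) * (∫ ω, Y ω ∂μ)) := hb1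
    _ ≤ M₁ * (M₂ * (4 * α)) := by
        rw [hcomm]; exact mul_le_mul_of_nonneg_left h2 hM₁nn
    _ = 4 * M₁ * M₂ * α := by ring
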